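/- Shrinking of l₃₁-intervals under converting: if a finite digraph G contains an l₃₁-interval of length ℓ ≥ 2, then its line digraph L(G) contains an l₃₁-interval of length ℓ − 1. -/

import Mathlib

universe u

/-- The line digraph of a digraph `G`: vertices are the edges of `G`. -/
def lineDigraph {V : Type u} (G : Digraph V) : Digraph {e : V × V // G.Adj e.1 e.2} where
  Adj e f := e.1.2 = f.1.1

instance {V : Type u} (G : Digraph V) [Fintype V] [DecidableRel G.Adj] :
    Fintype {e : V × V // G.Adj e.1 e.2} :=
  Subtype.fintype _

instance {V : Type u} (G : Digraph V) [DecidableEq V] :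
    DecidableRel (lineDigraph G).Adj :=
  fun e f => inferInstanceAs (Decidable (e.1.2 = f.1.1))

/-- The finset of (directed) edges of `G`. -/
def edgeFinset {V : Type u} (G : Digraph V) [Fintype V] [DecidableRel G.Adj] :
    Finset (V × V) :=
  Finset.univ.filter (fun p => G.Adj p.1 p.2)

/-- The indegree of a vertex. -/
def indeg {V : Type u} (G : Digraph V) [Fintype V] [DecidableRel G.Adj] (v : V) : ℕ :=
  (Finset.univ.filter (fun u => G.Adj u v)).card

/-- The outdegree of a vertex. -/
def outdeg {V : Type u} (G : Digraph V) [Fintype V] [DecidableRel G.Adj] (v : V) : ℕ :=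
  (Finset.univ.filter (fun w => G.Adj v w)).card

/-- The cyclomatic number `ν(G) = |E| - |V| + 1`, as an integer. -/
def cyclomatic {V : Type u} (G : Digraph V) [Fintype V] [DecidableRel G.Adj] : ℤ :=
  ((edgeFinset G).card : ℤ) - (Fintype.card V : ℤ) + 1

/-- A directed walk of length `k` in `G`. -/
def IsWalk {V : Type u} (G : Digraph V) {k : ℕ} (w : Fin (k + 1) → V) : Prop :=
  ∀ i : Fin k, G.Adj (w i.castSucc) (w i.succ)

instance {V : Type u} (G : Digraph V) [DecidableRel G.Adj] {k : ℕ} :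
    DecidablePred (IsWalk G (k := k)) :=
  fun w => inferInstanceAs (Decidable (∀ i : Fin k, G.Adj (w i.castSucc) (w i.succ)))

/-- A bundled finite digraph. -/
structure FinDigraph where
  V : Type
  [fin : Fintype V]
  [deq : DecidableEq V]
  G : Digraph V
  [dec : DecidableRel G.Adj]

attribute [instance] FinDigraph.fin FinDigraph.deq FinDigraph.dec

/-- One straight-converting step: the bundled line digraph. -/
def FinDigraph.line (H : FinDigraph) : FinDigraph where
  V := {e : H.V × H.V // H.G.Adj e.1 e.2}
  G := lineDigraph H.G

/-- The `j`-fold iterated line digraph. -/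
def FinDigraph.iterLine (H : FinDigraph) : ℕ → FinDigraph
  | 0 => H
  | j + 1 => (H.iterLine j).line

/-- Canonical: every vertex simple. -/
def FinDigraph.Canonical (H : FinDigraph) : Prop :=
  ∀ v : H.V, indeg H.G v ≤ 1 ∨ outdeg H.G v ≤ 1

/-- Contains a complicated vertex. -/
def FinDigraph.HasComplicated (H : FinDigraph) : Prop :=
  ∃ v : H.V, 2 ≤ indeg H.G v ∧ 2 ≤ outdeg H.G v

/-- An `l₃₁`-interval of length `ℓ`. -/
def IsL31 {V : Type u} (G : Digraph V) [Fintype V] [DecidableRel G.Adj] {ℓ : ℕ}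
    (w : Fin (ℓ + 1) → V) : Prop :=
  IsWalk G w ∧ 2 ≤ indeg G (w 0) ∧ 2 ≤ outdeg G (w (Fin.last ℓ)) ∧
    ∀ i : Fin (ℓ + 1), 0 < (i : ℕ) → (i : ℕ) < ℓ →
      indeg G (w i) = 1 ∧ outdeg G (w i) = 1

/-- A directed cycle of length `k`. -/
def IsCycle {V : Type u} (G : Digraph V) {k : ℕ} (w : Fin (k + 1) → V) : Prop :=
  IsWalk G w ∧ w 0 = w (Fin.last k) ∧
    ∀ i j : Fin (k + 1), (i : ℕ) < k → (j : ℕ) < k → w i = w j → i = j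

/-- `G` has a contour: a directed cycle with both an entry edge and an exit edge. -/
def HasContour {V : Type u} (G : Digraph V) : Prop :=
  ∃ (k : ℕ) (w : Fin (k + 2) → V), IsCycle G (k := k + 1) w ∧
    (∃ a b : V, G.Adj a b ∧ (∃ i, w i = b) ∧
      ¬ ∃ i : Fin (k + 1), w i.castSucc = a ∧ w i.succ = b) ∧
    (∃ a b : V, G.Adj a b ∧ (∃ i, w i = a) ∧
      ¬ ∃ i : Fin (k + 1), w i.castSucc = a ∧ w i.succ = b)

theorem indeg_line {V : Type u} [Fintype V] [DecidableEq V]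
    (G : Digraph V) [DecidableRel G.Adj] (f : {e : V × V // G.Adj e.1 e.2}) :
    indeg (lineDigraph G) f = indeg G f.1.1 := by
  unfold indeg
  apply Finset.card_bij (fun e _ => e.1.1)
  · intro e he
    simp only [Finset.mem_filter, Finset.mem_univ, true_and] at he ⊢
    have := e.2
    rw [show e.1.2 = f.1.1 from he] at this
    exact this
  · intro e1 h1 e2 h2 hee
    simp only [Finset.mem_filter, Finset.mem_univ, true_and] at h1 h2
    apply Subtype.ext
    exact Prod.ext hee (h1.trans h2.symm)
  · intro u hu
    simp only [Finset.mem_filter, Finset.mem_univ, true_and] at hu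
    exact ⟨⟨(u, f.1.1), hu⟩, Finset.mem_filter.mpr ⟨Finset.mem_univ _, rfl⟩, rfl⟩

theorem outdeg_line {V : Type u} [Fintype V] [DecidableEq V]
    (G : Digraph V) [DecidableRel G.Adj] (e : {e : V × V // G.Adj e.1 e.2}) :
    outdeg (lineDigraph G) e = outdeg G e.1.2 := by
  unfold outdeg
  apply Finset.card_bij (fun f _ => f.1.2)
  · intro f hf
    simp only [Finset.mem_filter, Finset.mem_univ, true_and] at hf ⊢
    have hf' : (e : V × V).2 = (f : V × V).1 := hf
    rw [hf']
    exact f.2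
  · intro f1 h1 f2 h2 hff
    simp only [Finset.mem_filter, Finset.mem_univ, true_and] at h1 h2
    apply Subtype.ext
    exact Prod.ext (h1.symm.trans h2) hff
  · intro u hu
    simp only [Finset.mem_filter, Finset.mem_univ, true_and] at hu
    exact ⟨⟨(e.1.2, u), hu⟩, Finset.mem_filter.mpr ⟨Finset.mem_univ _, rfl⟩, rfl⟩

/-- if `G` contains an `l₃₁`-interval of length `ℓ = m + 2 ≥ 2`,
then `L(G)` contains an `l₃₁`-interval of length `ℓ - 1 = m + 1`. -/
theorem l31_shrinks {V : Type u} [Fintype V] [DecidableEq V]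
    (G : Digraph V) [DecidableRel G.Adj] {m : ℕ}
    (w : Fin (m + 3) → V) (h : IsL31 G (ℓ := m + 2) w) :
    ∃ w' : Fin (m + 2) → {e : V × V // G.Adj e.1 e.2},
      IsL31 (lineDigraph G) (ℓ := m + 1) w' := by
  obtain ⟨hwalk, hin, hout, hmid⟩ := h
  refine ⟨fun i => ⟨(w i.castSucc, w i.succ), hwalk i⟩, ?_, ?_, ?_, ?_⟩
  · intro i
    show w i.castSucc.succ = w i.succ.castSucc
    exact congrArg w (Fin.ext rfl)
  · rw [indeg_line]
    simpa using hin
  · rw [outdeg_line]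
    have : (Fin.last (m + 1)).succ = Fin.last (m + 2) := rfl
    simpa [this] using hout
  · intro i hi0 hi
    rw [indeg_line, outdeg_line]
    constructor
    · exact (hmid i.castSucc (by simpa using hi0) (by simp)).1
    · exact (hmid i.succ (by simp) (by simp; omega)).2
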